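/- arXiv:2108.09805 — 2 statements merged into one kernel-verified Lean document; each statement's English description precedes it below -/
import Mathlib

section
/- Let N(μ*, Σ) and N(μ, Σ) be d-dimensional Gaussians with the same covariance Σ, with σ² := Σ_{ii} and μ*_i = 1 for a fixed coordinate i. If μ_i > 1, then P_{x∼N(μ*,Σ)}[−1 ≤ x_i ≤ 1] − P_{x∼N(μ,Σ)}[−1 ≤ x_i ≤ 1] ≥ P_{t∼N(1,σ²)}[−1 ≤ t ≤ 1] · (1 − exp(−(μ_i−1)²/(2σ²))). -/
open MeasureTheory ProbabilityTheory

lemma gauss_pdf_le (v : NNReal) (hv : 0 < v) (m : ℝ) (hm : 1 < m) (x : ℝ) (hx : x ≤ 1) :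
    gaussianPDFReal m v x ≤
      Real.exp (-(m - 1) ^ 2 / (2 * (v : ℝ))) * gaussianPDFReal 1 v x := by
  unfold gaussianPDFReal
  rw [mul_left_comm]
  have hvpos : (0 : ℝ) < v := hv
  apply mul_le_mul_of_nonneg_left _ (by positivity)
  rw [← Real.exp_add]
  apply Real.exp_le_exp.mpr
  rw [← add_div, div_le_div_iff₀ (by positivity) (by positivity)]
  nlinarith [mul_nonneg (mul_nonneg (sub_nonneg.2 hm.le) (sub_nonneg.2 hx)) hvpos.le]

/-- Band sensitivity: for one-dimensional Gaussians with common variance `v = σ²`,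
mean `1` versus mean `m > 1`, the gap of the masses of `[-1,1]` is at least
`P_{N(1,σ²)}[-1 ≤ t ≤ 1] · (1 - exp(-(m-1)²/(2σ²)))`. -/
theorem stmt11 (v : NNReal) (hv : 0 < v) (m : ℝ) (hm : 1 < m) :
    ((gaussianReal 1 v) (Set.Icc (-1) 1)).toReal -
        ((gaussianReal m v) (Set.Icc (-1) 1)).toReal ≥
      ((gaussianReal 1 v) (Set.Icc (-1) 1)).toReal *
        (1 - Real.exp (-(m - 1) ^ 2 / (2 * (v : ℝ)))) := by
  have hv' : v ≠ 0 := hv.ne'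
  set c := Real.exp (-(m - 1) ^ 2 / (2 * (v : ℝ))) with hc
  have key : ((gaussianReal m v) (Set.Icc (-1) 1)).toReal ≤
      c * ((gaussianReal 1 v) (Set.Icc (-1) 1)).toReal := by
    rw [gaussianReal_apply_eq_integral m hv', gaussianReal_apply_eq_integral 1 hv']
    rw [ENNReal.toReal_ofReal (setIntegral_nonneg measurableSet_Icc
      fun x _ => gaussianPDFReal_nonneg m v x),
      ENNReal.toReal_ofReal (setIntegral_nonneg measurableSet_Icc
      fun x _ => gaussianPDFReal_nonneg 1 v x)]
    rw [← integral_const_mul]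
    apply setIntegral_mono_on
    · exact (integrable_gaussianPDFReal m v).integrableOn
    · exact ((integrable_gaussianPDFReal 1 v).const_mul c).integrableOn
    · exact measurableSet_Icc
    · intro x hx
      exact gauss_pdf_le v hv m hm x hx.2
  nlinarith [ENNReal.toReal_nonneg (a := (gaussianReal 1 v) (Set.Icc (-1) 1))]
end

section
/- Let N(μ₁,Σ₁) and N(μ₂,Σ₂) be d-dimensional Gaussians with Σ₁ positive definite. Then TV(N(μ₁,Σ₁), N(μ₂,Σ₂)) ≤ (1/2)‖Σ₁^{−1/2}(μ₁−μ₂)‖₂ + √2 · ‖I − Σ₁^{−1/2} Σ₂ Σ₁^{−1/2}‖_F. -/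
open MeasureTheory
open Real Matrix

lemma cont_quad (d : ℕ) (P : Matrix (Fin d) (Fin d) ℝ) :
    Continuous fun x : Fin d → ℝ => x ⬝ᵥ P *ᵥ x := by
  simp only [dotProduct, Matrix.mulVec]
  fun_prop

lemma std_int (d : ℕ) :
    ∫ x : Fin d → ℝ, Real.exp (-(x ⬝ᵥ x) / 2) = Real.sqrt ((2 * π) ^ d) := by
  have h : ∀ x : Fin d → ℝ, Real.exp (-(x ⬝ᵥ x) / 2) = ∏ i, Real.exp (-(1/2) * (x i)^2) := by
    intro x
    rw [← Real.exp_sum]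
    congr 1
    simp only [dotProduct]
    rw [neg_div, Finset.sum_div, ← Finset.sum_neg_distrib]
    exact Finset.sum_congr rfl fun i _ => by ring
  simp_rw [h]
  rw [MeasureTheory.volume_pi, MeasureTheory.integral_fintype_prod_eq_pow (ι := Fin d) (fun t : ℝ => Real.exp (-(1/2) * t^2)),
    integral_gaussian, Fintype.card_fin]
  have h2 : (π / (1/2)) = 2 * π := by ring
  rw [h2]
  calc √(2*π) ^ d = √((√(2*π) ^ d)^2) := (Real.sqrt_sq (by positivity)).symm
  _ = √((2*π) ^ d) := by rw [← pow_mul, mul_comm d 2, pow_mul, Real.sq_sqrt (by positivity)]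

lemma std_integrable (d : ℕ) :
    Integrable (fun x : Fin d → ℝ => Real.exp (-(x ⬝ᵥ x) / 2)) := by
  have h : ∀ x : Fin d → ℝ, Real.exp (-(x ⬝ᵥ x) / 2) = ∏ i, Real.exp (-(1/2) * (x i)^2) := by
    intro x
    rw [← Real.exp_sum]
    congr 1
    simp only [dotProduct]
    rw [neg_div, Finset.sum_div, ← Finset.sum_neg_distrib]
    exact Finset.sum_congr rfl fun i _ => by ring
  simp_rw [h]
  exact Integrable.fintype_prod fun i => integrable_exp_neg_mul_sq (by norm_num)

lemma gauss_int (d : ℕ) (P : Matrix (Fin d) (Fin d) ℝ) (hP : P.PosDef) :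
    (∫ x : Fin d → ℝ, Real.exp (-(x ⬝ᵥ P *ᵥ x) / 2)) = Real.sqrt ((2 * π) ^ d / P.det)
    ∧ Integrable (fun x : Fin d → ℝ => Real.exp (-(x ⬝ᵥ P *ᵥ x) / 2)) := by
  classical
  obtain ⟨B, hBpsd, hBsq⟩ : ∃ B : Matrix (Fin d) (Fin d) ℝ, B.PosSemidef ∧ B * B = P := by
    open scoped MatrixOrder in
    exact ⟨CFC.sqrt P, (CFC.sqrt_nonneg P).posSemidef, CFC.sqrt_mul_sqrt_self P hP.posSemidef.nonneg⟩
  have hBsym : Bᵀ = B := by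
    rw [← Matrix.conjTranspose_eq_transpose_of_trivial]; exact hBpsd.isHermitian
  -- determinant facts
  have hdetB_nonneg : 0 ≤ B.det := by
    rw [hBpsd.isHermitian.det_eq_prod_eigenvalues]
    exact Finset.prod_nonneg fun i _ => hBpsd.eigenvalues_nonneg i
  have hdetB_sq : B.det * B.det = P.det := by rw [← Matrix.det_mul, hBsq]
  have hdetP_pos : 0 < P.det := hP.det_pos
  have hdetB_pos : 0 < B.det := by
    rcases lt_or_eq_of_le hdetB_nonneg with h | h
    · exact h
    · exfalso; rw [← h] at hdetB_sq; simp at hdetB_sq; linarith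
  have hdetB : B.det = Real.sqrt P.det := by
    rw [← hdetB_sq, Real.sqrt_mul_self hdetB_nonneg]
  -- quadratic identity
  have hquad : ∀ x : Fin d → ℝ, (B *ᵥ x) ⬝ᵥ (B *ᵥ x) = x ⬝ᵥ P *ᵥ x := by
    intro x
    rw [← hBsq, ← Matrix.mulVec_mulVec, Matrix.dotProduct_mulVec x]
    conv_rhs => rw [← hBsym]
    rw [Matrix.vecMul_transpose, hBsym]
  -- change of variables
  have hT : Continuous (Matrix.toLin' B) := LinearMap.continuous_of_finiteDimensional _
  have hmap : Measure.map (Matrix.toLin' B) volume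
      = ENNReal.ofReal |B.det⁻¹| • volume :=
    Real.map_matrix_volume_pi_eq_smul_volume_pi (ne_of_gt hdetB_pos)
  have hφc : Continuous (fun y : Fin d → ℝ => Real.exp (-(y ⬝ᵥ y) / 2)) := by
    have := cont_quad d (1 : Matrix (Fin d) (Fin d) ℝ)
    simp only [Matrix.one_mulVec] at this
    fun_prop
  have key : (∫ x : Fin d → ℝ, Real.exp (-(x ⬝ᵥ P *ᵥ x) / 2))
      = (B.det)⁻¹ * Real.sqrt ((2 * π) ^ d) := by
    have h1 : (∫ x : Fin d → ℝ, Real.exp (-(x ⬝ᵥ P *ᵥ x) / 2))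
        = ∫ x : Fin d → ℝ, Real.exp (-((Matrix.toLin' B x) ⬝ᵥ (Matrix.toLin' B x)) / 2) := by
      congr 1; ext x; rw [Matrix.toLin'_apply, hquad]
    rw [h1, ← MeasureTheory.integral_map hT.aemeasurable
      (hφc.aestronglyMeasurable), hmap, MeasureTheory.integral_smul_measure, std_int]
    rw [ENNReal.toReal_ofReal (abs_nonneg _), abs_of_pos (by positivity)]
    simp
  constructor
  · rw [key, hdetB, Real.sqrt_div (by positivity : (0:ℝ) ≤ (2*π)^d), inv_mul_eq_div]
  · have : Integrable (fun y : Fin d → ℝ => Real.exp (-(y ⬝ᵥ y) / 2))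
        (Measure.map (Matrix.toLin' B) volume) := by
      rw [hmap]
      exact (std_integrable d).smul_measure ENNReal.ofReal_ne_top
    have h2 := (integrable_map_measure hφc.aestronglyMeasurable hT.aemeasurable).mp this
    have : (fun x => Real.exp (-((Matrix.toLin' B) x ⬝ᵥ (Matrix.toLin' B) x) / 2))
        = fun x : Fin d → ℝ => Real.exp (-(x ⬝ᵥ P *ᵥ x) / 2) := by
      ext x; rw [Matrix.toLin'_apply, hquad]
    rwa [Function.comp_def, this] at h2

lemma hellinger_tv {α : Type*} [MeasureSpace α] (u v : α → ℝ)
    (hu : AEStronglyMeasurable u (volume : Measure α))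
    (hv : AEStronglyMeasurable v (volume : Measure α))
    (hu0 : ∀ x, 0 ≤ u x) (hv0 : ∀ x, 0 ≤ v x)
    (huu : Integrable (fun x => u x ^ 2)) (hvv : Integrable (fun x => v x ^ 2))
    (huv : Integrable (fun x => u x * v x))
    (hu2 : ∫ x, u x ^ 2 = 1) (hv2 : ∫ x, v x ^ 2 = 1) :
    ∫ x, |u x ^ 2 - v x ^ 2| ≤ 2 * Real.sqrt (1 - (∫ x, u x * v x) ^ 2) := by
  set ρ := ∫ x, u x * v x with hρ
  have hρ0 : 0 ≤ ρ := integral_nonneg fun x => mul_nonneg (hu0 x) (hv0 x)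
  have h12 : Integrable (fun x => u x ^ 2 + v x ^ 2) := huu.add hvv
  have h2uv : Integrable (fun x => 2 * (u x * v x)) := huv.const_mul 2
  have hsub_eq : (fun x => (u x - v x) ^ 2)
      = fun x => (u x ^ 2 + v x ^ 2) - 2 * (u x * v x) := by ext x; ring
  have hadd_eq : (fun x => (u x + v x) ^ 2)
      = fun x => (u x ^ 2 + v x ^ 2) + 2 * (u x * v x) := by ext x; ring
  have hsub_int : Integrable (fun x => (u x - v x) ^ 2) := by rw [hsub_eq]; exact h12.sub h2uv
  have hadd_int : Integrable (fun x => (u x + v x) ^ 2) := by rw [hadd_eq]; exact h12.add h2uv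
  have hsub_val : ∫ x, (u x - v x) ^ 2 = 2 - 2 * ρ := by
    rw [hsub_eq, integral_sub h12 h2uv, integral_add huu hvv,
      integral_const_mul, hu2, hv2, ← hρ]; ring
  have hadd_val : ∫ x, (u x + v x) ^ 2 = 2 + 2 * ρ := by
    rw [hadd_eq, integral_add h12 h2uv, integral_add huu hvv,
      integral_const_mul, hu2, hv2, ← hρ]; ring
  have hρ1 : ρ ≤ 1 := by
    have h : (0:ℝ) ≤ ∫ x, (u x - v x) ^ 2 := integral_nonneg fun x => sq_nonneg _
    rw [hsub_val] at h; linarith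
  have hpt : ∀ x, |u x ^ 2 - v x ^ 2| = |u x - v x| * (u x + v x) := by
    intro x
    rw [show u x ^ 2 - v x ^ 2 = (u x - v x) * (u x + v x) by ring, abs_mul,
      abs_of_nonneg (add_nonneg (hu0 x) (hv0 x))]
  have hmuv : AEStronglyMeasurable (fun x => |u x - v x|) (volume : Measure α) := by
    simpa [Real.norm_eq_abs] using (hu.sub hv).norm
  have hmadd : AEStronglyMeasurable (fun x => u x + v x) (volume : Measure α) := hu.add hv
  have habs_sq : (fun x => |u x - v x| ^ 2) = fun x => (u x - v x) ^ 2 := by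
    ext x; rw [sq_abs]
  have hmem1 : MemLp (fun x => |u x - v x|) (ENNReal.ofReal (2:ℝ)) := by
    rw [show ENNReal.ofReal (2:ℝ) = 2 by norm_num]
    exact (memLp_two_iff_integrable_sq hmuv).mpr (by rw [habs_sq]; exact hsub_int)
  have hmem2 : MemLp (fun x => u x + v x) (ENNReal.ofReal (2:ℝ)) := by
    rw [show ENNReal.ofReal (2:ℝ) = 2 by norm_num]
    exact (memLp_two_iff_integrable_sq hmadd).mpr hadd_int
  have hconj : Real.HolderConjugate 2 2 := Real.holderConjugate_iff.mpr ⟨by norm_num, by norm_num⟩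
  have hH := integral_mul_le_Lp_mul_Lq_of_nonneg hconj
    (Filter.Eventually.of_forall fun x => abs_nonneg (u x - v x))
    (Filter.Eventually.of_forall fun x => add_nonneg (hu0 x) (hv0 x)) hmem1 hmem2
  -- convert rpow to pow
  have e1 : ∫ x, |u x - v x| ^ (2:ℝ) = 2 - 2 * ρ := by
    rw [← hsub_val]
    refine integral_congr_ae (Filter.Eventually.of_forall fun x => ?_)
    show |u x - v x| ^ (2:ℝ) = (u x - v x) ^ 2
    rw [show ((2:ℝ)) = ((2:ℕ):ℝ) by norm_num, Real.rpow_natCast, sq_abs]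
  have e2 : ∫ x, (u x + v x) ^ (2:ℝ) = 2 + 2 * ρ := by
    rw [← hadd_val]
    refine integral_congr_ae (Filter.Eventually.of_forall fun x => ?_)
    show (u x + v x) ^ (2:ℝ) = (u x + v x) ^ 2
    rw [show ((2:ℝ)) = ((2:ℕ):ℝ) by norm_num, Real.rpow_natCast]
  rw [e1, e2] at hH
  calc ∫ x, |u x ^ 2 - v x ^ 2| = ∫ x, |u x - v x| * (u x + v x) := by
        exact integral_congr_ae (Filter.Eventually.of_forall fun x => hpt x)
    _ ≤ (2 - 2*ρ) ^ ((1:ℝ)/2) * (2 + 2*ρ) ^ ((1:ℝ)/2) := hH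
    _ = Real.sqrt (2 - 2*ρ) * Real.sqrt (2 + 2*ρ) := by
        rw [← Real.sqrt_eq_rpow, ← Real.sqrt_eq_rpow]
    _ = Real.sqrt ((2 - 2*ρ) * (2 + 2*ρ)) := (Real.sqrt_mul (by linarith) _).symm
    _ = Real.sqrt (4 * (1 - ρ^2)) := by congr 1; ring
    _ = Real.sqrt 4 * Real.sqrt (1 - ρ^2) := Real.sqrt_mul (by norm_num) _
    _ = 2 * Real.sqrt (1 - ρ^2) := by
        rw [show (4:ℝ) = 2^2 by norm_num, Real.sqrt_sq (by norm_num)]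

lemma eigen_facts (d : ℕ) (M : Matrix (Fin d) (Fin d) ℝ) (hM : M.PosDef) :
    ∃ lam : Fin d → ℝ, (∀ i, 0 < lam i) ∧ M.det = ∏ i, lam i
      ∧ (1 + M).det = ∏ i, (1 + lam i)
      ∧ (∑ i, ∑ j, ((1 - M) i j) ^ 2) = ∑ i, (1 - lam i) ^ 2 := by
  classical
  have hherm := hM.isHermitian
  set lam := hherm.eigenvalues with hlam
  set U : Matrix (Fin d) (Fin d) ℝ := (hherm.eigenvectorUnitary : Matrix (Fin d) (Fin d) ℝ)
    with hU
  have hU1 : U * star U = 1 := (Matrix.mem_unitaryGroup_iff).mp hherm.eigenvectorUnitary.2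
  have hU2 : star U * U = 1 := (Matrix.mem_unitaryGroup_iff').mp hherm.eigenvectorUnitary.2
  have hD : (RCLike.ofReal ∘ lam : Fin d → ℝ) = lam := by ext i; simp
  have hspec : M = U * Matrix.diagonal lam * star U := by
    have := hherm.spectral_theorem
    rwa [hD] at this
  set D : Matrix (Fin d) (Fin d) ℝ := Matrix.diagonal lam with hDdef
  refine ⟨lam, hM.eigenvalues_pos, ?_, ?_, ?_⟩
  · simpa using hherm.det_eq_prod_eigenvalues
  · have h1 : 1 + M = U * (1 + D) * star U := by
      rw [Matrix.mul_add, Matrix.add_mul, Matrix.mul_one, hU1, ← hspec]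
    rw [h1, Matrix.det_mul, Matrix.det_mul]
    have : U.det * (1 + D).det * (star U).det = (1 + D).det * (U.det * (star U).det) := by ring
    rw [this, ← Matrix.det_mul, hU1, Matrix.det_one, mul_one]
    rw [hDdef, ← Matrix.diagonal_one, Matrix.diagonal_add, Matrix.det_diagonal]
  · have hsub : 1 - M = U * (1 - D) * star U := by
      rw [Matrix.mul_sub, Matrix.sub_mul, Matrix.mul_one, hU1, ← hspec]
    set N := 1 - M with hN
    have hNherm : Nᴴ = N := by
      rw [hN, Matrix.conjTranspose_sub, Matrix.conjTranspose_one, hM.isHermitian.eq]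
    have hNsymm : ∀ i j, N j i = N i j := by
      intro i j
      conv_lhs => rw [← hNherm]
      simp [Matrix.conjTranspose_apply]
    have hNN : N * N = U * (Matrix.diagonal fun i => (1 - lam i) * (1 - lam i)) * star U := by
      rw [hsub]
      calc (U * (1 - D) * star U) * (U * (1 - D) * star U)
          = U * ((1 - D) * (star U * U) * (1 - D)) * star U := by
            simp only [Matrix.mul_assoc]
        _ = U * ((1 - D) * (1 - D)) * star U := by rw [hU2, Matrix.mul_one]
        _ = U * (Matrix.diagonal fun i => (1 - lam i) * (1 - lam i)) * star U := by
            rw [hDdef, ← Matrix.diagonal_one, Matrix.diagonal_sub, Matrix.diagonal_mul_diagonal]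
    have htr : (N * N).trace = ∑ i, (1 - lam i) ^ 2 := by
      rw [hNN, Matrix.trace_mul_cycle, hU2, Matrix.one_mul, Matrix.trace_diagonal]
      exact Finset.sum_congr rfl fun i _ => (sq (1 - lam i)).symm
    rw [← htr, Matrix.trace]
    refine Finset.sum_congr rfl fun i _ => ?_
    rw [Matrix.diag_apply, Matrix.mul_apply]
    exact Finset.sum_congr rfl fun j _ => by rw [hNsymm i j, sq]

lemma one_sub_prod_le {d : ℕ} (t : Fin d → ℝ) (h0 : ∀ i, 0 ≤ t i) (h1 : ∀ i, t i ≤ 1) :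
    1 - ∏ i, t i ≤ ∑ i, (1 - t i) := by
  classical
  have : ∀ s : Finset (Fin d), 1 - ∏ i ∈ s, t i ≤ ∑ i ∈ s, (1 - t i) := by
    intro s
    induction s using Finset.induction_on with
    | empty => simp
    | @insert a s' hx ih =>
      rw [Finset.prod_insert hx, Finset.sum_insert hx]
      have hP1 : ∏ i ∈ s', t i ≤ 1 := Finset.prod_le_one (fun i _ => h0 i) (fun i _ => h1 i)
      have hP0 : 0 ≤ ∏ i ∈ s', t i := Finset.prod_nonneg fun i _ => h0 i
      nlinarith [h0 a, h1 a]
  exact this Finset.univ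

lemma t_facts (l : ℝ) (hl : 0 < l) :
    0 ≤ 2 * Real.sqrt l / (1 + l) ∧ 2 * Real.sqrt l / (1 + l) ≤ 1
      ∧ 1 - 2 * Real.sqrt l / (1 + l) ≤ (1 - l) ^ 2 := by
  have hr0 : 0 ≤ Real.sqrt l := Real.sqrt_nonneg l
  have hr2 : Real.sqrt l ^ 2 = l := Real.sq_sqrt hl.le
  have h1l : 0 < 1 + l := by linarith
  refine ⟨by positivity, ?_, ?_⟩
  · rw [div_le_one h1l]; nlinarith [sq_nonneg (Real.sqrt l - 1)]
  · have h : (1 - (1 - l) ^ 2) * (1 + l) ≤ 2 * Real.sqrt l := by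
      nlinarith [sq_nonneg (Real.sqrt l - 1), mul_nonneg hr0 (sq_nonneg (Real.sqrt l - 1)),
        mul_nonneg (mul_nonneg hr0 hr0) (sq_nonneg (Real.sqrt l - 1)),
        mul_nonneg (mul_nonneg (mul_nonneg hr0 hr0) hr0) (sq_nonneg (Real.sqrt l - 1)),
        sq_nonneg (Real.sqrt l * (Real.sqrt l - 1))]
    have h2 := (le_div_iff₀ h1l).mpr h
    linarith

lemma cross_symm {d : ℕ} (P : Matrix (Fin d) (Fin d) ℝ) (hsym : Pᵀ = P)
    (a b : Fin d → ℝ) : a ⬝ᵥ P *ᵥ b = b ⬝ᵥ P *ᵥ a := by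
  rw [Matrix.dotProduct_mulVec a]
  conv_lhs => rw [← hsym]
  rw [Matrix.vecMul_transpose, dotProduct_comm]

lemma quad_par {d : ℕ} (P : Matrix (Fin d) (Fin d) ℝ) (hsym : Pᵀ = P)
    (x m1 m2 : Fin d → ℝ) :
    (x - m1) ⬝ᵥ P *ᵥ (x - m1) + (x - m2) ⬝ᵥ P *ᵥ (x - m2)
      = 2 * ((x - (2⁻¹:ℝ) • (m1 + m2)) ⬝ᵥ P *ᵥ (x - (2⁻¹:ℝ) • (m1 + m2)))
        + ((m1 - m2) ⬝ᵥ P *ᵥ (m1 - m2)) / 2 := by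
  set w := x - (2⁻¹:ℝ) • (m1 + m2) with hw
  set dl := m1 - m2 with hdl
  have e1 : x - m1 = w - (2⁻¹:ℝ) • dl := by
    ext i; simp [hw, hdl]; ring
  have e2 : x - m2 = w + (2⁻¹:ℝ) • dl := by
    ext i; simp [hw, hdl]; ring
  rw [e1, e2]
  have hc := cross_symm P hsym w dl
  have hc2 := cross_symm P hsym dl w
  simp only [Matrix.mulVec_add, Matrix.mulVec_sub, Matrix.mulVec_smul,
    add_dotProduct, sub_dotProduct, smul_dotProduct,
    dotProduct_add, dotProduct_sub, dotProduct_smul,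
    smul_eq_mul]
  nlinarith [hc]

lemma gauss_center (d : ℕ) (P : Matrix (Fin d) (Fin d) ℝ) (hP : P.PosDef) (m : Fin d → ℝ) :
    (∫ x : Fin d → ℝ, Real.exp (-((x - m) ⬝ᵥ P *ᵥ (x - m)) / 2))
      = Real.sqrt ((2 * π) ^ d / P.det)
    ∧ Integrable (fun x : Fin d → ℝ => Real.exp (-((x - m) ⬝ᵥ P *ᵥ (x - m)) / 2)) := by
  obtain ⟨hval, hint⟩ := gauss_int d P hP
  constructor
  · rw [← hval]
    exact integral_sub_right_eq_self (fun y => Real.exp (-(y ⬝ᵥ P *ᵥ y) / 2)) m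
  · have h := hint.comp_add_right (-m)
    simpa [sub_eq_add_neg] using h

lemma cont_gauss (d : ℕ) (P : Matrix (Fin d) (Fin d) ℝ) (m : Fin d → ℝ) (c : ℝ) :
    Continuous (fun x : Fin d → ℝ => c * Real.exp (-((x - m) ⬝ᵥ P *ᵥ (x - m)) / 4)) := by
  have h1 : Continuous fun x : Fin d → ℝ => (x - m) ⬝ᵥ P *ᵥ (x - m) :=
    (cont_quad d P).comp (continuous_id.sub continuous_const)
  fun_prop

set_option maxHeartbeats 1000000 in
/-- TV distance upper bound between Gaussians `N(μ₁,S1)` and `N(μ₂,S2)` (expressed via their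
densities): `TV ≤ (1/2)‖S1^{-1/2}(μ₁-μ₂)‖₂ + √2 ‖I - S1^{-1/2} S2 S1^{-1/2}‖_F`,
where `A = S1^{-1/2}` is the positive definite square root of `S1⁻¹`. -/
theorem stmt16 (d : ℕ) (μ₁ μ₂ : Fin d → ℝ) (S1 S2 A : Matrix (Fin d) (Fin d) ℝ)
    (hS1 : S1.PosDef) (hS2 : S2.PosDef) (hA : A.PosDef) (hAsq : A * A = S1⁻¹) :
    (1 / 2) * ∫ x : Fin d → ℝ,
        |(Real.sqrt ((2 * Real.pi) ^ d * S1.det))⁻¹ *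
            Real.exp (-(dotProduct (x - μ₁) (S1⁻¹.mulVec (x - μ₁))) / 2) -
          (Real.sqrt ((2 * Real.pi) ^ d * S2.det))⁻¹ *
            Real.exp (-(dotProduct (x - μ₂) (S2⁻¹.mulVec (x - μ₂))) / 2)| ≤
      (1 / 2) * Real.sqrt (∑ i, (A.mulVec (μ₁ - μ₂) i) ^ 2) +
        Real.sqrt 2 * Real.sqrt (∑ i, ∑ j, ((1 - A * S2 * A) i j) ^ 2) := by
  classical
  have hπd : (0:ℝ) < (2 * Real.pi) ^ d := by positivity
  have hS1d : (0:ℝ) < S1.det := hS1.det_pos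
  have hS2d : (0:ℝ) < S2.det := hS2.det_pos
  have hdA : (0:ℝ) < A.det := hA.det_pos
  have hS1i : (S1⁻¹).PosDef := hS1.inv
  have hS2i : (S2⁻¹).PosDef := hS2.inv
  have hAsym : Aᵀ = A := by
    rw [← Matrix.conjTranspose_eq_transpose_of_trivial]; exact hA.isHermitian
  have hS1isym : (S1⁻¹)ᵀ = S1⁻¹ := by
    rw [← Matrix.conjTranspose_eq_transpose_of_trivial]; exact hS1i.isHermitian
  have hdet1 : (S1⁻¹).det = S1.det⁻¹ := by rw [Matrix.det_nonsing_inv, Ring.inverse_eq_inv']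
  have hdet2 : (S2⁻¹).det = S2.det⁻¹ := by rw [Matrix.det_nonsing_inv, Ring.inverse_eq_inv']
  have hAunit : IsUnit A.det := isUnit_iff_ne_zero.mpr hdA.ne'
  have hAinv : A * A⁻¹ = 1 := Matrix.mul_nonsing_inv A hAunit
  have hAinv' : A⁻¹ * A = 1 := Matrix.nonsing_inv_mul A hAunit
  set M : Matrix (Fin d) (Fin d) ℝ := A * S2 * A with hMdef
  have hAx : ∀ x : Fin d → ℝ, x ≠ 0 → A *ᵥ x ≠ 0 := by
    intro x hx hax
    apply hx
    have h := congrArg (fun y => A⁻¹ *ᵥ y) hax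
    simp only [Matrix.mulVec_mulVec, hAinv', Matrix.one_mulVec, Matrix.mulVec_zero] at h
    exact h
  have hdotA : ∀ (x y : Fin d → ℝ), x ⬝ᵥ A *ᵥ y = (A *ᵥ x) ⬝ᵥ y := by
    intro x y
    rw [Matrix.dotProduct_mulVec x]
    conv_lhs => rw [← hAsym]
    rw [Matrix.vecMul_transpose]
  have hMpd : M.PosDef := by
    refine Matrix.PosDef.of_dotProduct_mulVec_pos ?_ ?_
    · show Mᴴ = M
      rw [hMdef, Matrix.conjTranspose_mul, Matrix.conjTranspose_mul, hA.isHermitian.eq,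
        hS2.isHermitian.eq, Matrix.mul_assoc]
    · intro x hx
      have h1 : star x ⬝ᵥ M *ᵥ x = (A *ᵥ x) ⬝ᵥ S2 *ᵥ (A *ᵥ x) := by
        rw [star_trivial, hMdef, ← Matrix.mulVec_mulVec, ← Matrix.mulVec_mulVec, hdotA]
      rw [h1]
      have h2 := hS2.dotProduct_mulVec_pos (hAx x hx)
      rwa [star_trivial] at h2
  set Q : Matrix (Fin d) (Fin d) ℝ := (2⁻¹:ℝ) • (S1⁻¹ + S2⁻¹) with hQdef
  have haddpd : (S1⁻¹ + S2⁻¹).PosDef := hS1i.add hS2i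
  have hQpd : Q.PosDef := by
    refine Matrix.PosDef.of_dotProduct_mulVec_pos ?_ ?_
    · show Qᴴ = Q
      rw [hQdef, Matrix.conjTranspose_smul, haddpd.isHermitian.eq, star_trivial]
    · intro x hx
      have h2 := haddpd.dotProduct_mulVec_pos hx
      rw [star_trivial] at h2 ⊢
      rw [hQdef, Matrix.smul_mulVec, dotProduct_smul, smul_eq_mul]
      exact mul_pos (by norm_num) h2
  have hQd : 0 < Q.det := hQpd.det_pos
  -- constants
  set c1 : ℝ := (Real.sqrt ((2 * Real.pi) ^ d * S1.det))⁻¹ with hc1def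
  set c2 : ℝ := (Real.sqrt ((2 * Real.pi) ^ d * S2.det))⁻¹ with hc2def
  have hc1pos : 0 < c1 := by rw [hc1def]; positivity
  have hc2pos : 0 < c2 := by rw [hc2def]; positivity
  -- functions
  set u : (Fin d → ℝ) → ℝ :=
    fun x => Real.sqrt c1 * Real.exp (-((x - μ₁) ⬝ᵥ S1⁻¹ *ᵥ (x - μ₁)) / 4) with hu
  set v : (Fin d → ℝ) → ℝ :=
    fun x => Real.sqrt c1 * Real.exp (-((x - μ₂) ⬝ᵥ S1⁻¹ *ᵥ (x - μ₂)) / 4) with hv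
  set w : (Fin d → ℝ) → ℝ :=
    fun x => Real.sqrt c2 * Real.exp (-((x - μ₂) ⬝ᵥ S2⁻¹ *ᵥ (x - μ₂)) / 4) with hw
  have hsq : ∀ (c t : ℝ), 0 ≤ c → (Real.sqrt c * Real.exp t) ^ 2 = c * Real.exp (t + t) := by
    intro c t hc
    rw [mul_pow, Real.sq_sqrt hc, sq, ← Real.exp_add]
  have hu2 : ∀ x, u x ^ 2 = c1 * Real.exp (-((x - μ₁) ⬝ᵥ S1⁻¹ *ᵥ (x - μ₁)) / 2) := by
    intro x
    rw [hu, hsq _ _ hc1pos.le,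
      show -((x - μ₁) ⬝ᵥ S1⁻¹ *ᵥ (x - μ₁)) / 4 + -((x - μ₁) ⬝ᵥ S1⁻¹ *ᵥ (x - μ₁)) / 4
        = -((x - μ₁) ⬝ᵥ S1⁻¹ *ᵥ (x - μ₁)) / 2 by ring]
  have hv2 : ∀ x, v x ^ 2 = c1 * Real.exp (-((x - μ₂) ⬝ᵥ S1⁻¹ *ᵥ (x - μ₂)) / 2) := by
    intro x
    rw [hv, hsq _ _ hc1pos.le,
      show -((x - μ₂) ⬝ᵥ S1⁻¹ *ᵥ (x - μ₂)) / 4 + -((x - μ₂) ⬝ᵥ S1⁻¹ *ᵥ (x - μ₂)) / 4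
        = -((x - μ₂) ⬝ᵥ S1⁻¹ *ᵥ (x - μ₂)) / 2 by ring]
  have hw2 : ∀ x, w x ^ 2 = c2 * Real.exp (-((x - μ₂) ⬝ᵥ S2⁻¹ *ᵥ (x - μ₂)) / 2) := by
    intro x
    rw [hw, hsq _ _ hc2pos.le,
      show -((x - μ₂) ⬝ᵥ S2⁻¹ *ᵥ (x - μ₂)) / 4 + -((x - μ₂) ⬝ᵥ S2⁻¹ *ᵥ (x - μ₂)) / 4
        = -((x - μ₂) ⬝ᵥ S2⁻¹ *ᵥ (x - μ₂)) / 2 by ring]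
  -- normalization helper
  have hsqrt1_ne : Real.sqrt ((2 * Real.pi) ^ d * S1.det) ≠ 0 :=
    (Real.sqrt_pos.mpr (by positivity)).ne'
  have hsqrt2_ne : Real.sqrt ((2 * Real.pi) ^ d * S2.det) ≠ 0 :=
    (Real.sqrt_pos.mpr (by positivity)).ne'
  obtain ⟨hval1, hint1⟩ := gauss_center d S1⁻¹ hS1i μ₁
  obtain ⟨hval2, hint2⟩ := gauss_center d S1⁻¹ hS1i μ₂
  obtain ⟨hval3, hint3⟩ := gauss_center d S2⁻¹ hS2i μ₂
  have hval1' : (∫ x : Fin d → ℝ, Real.exp (-((x - μ₁) ⬝ᵥ S1⁻¹ *ᵥ (x - μ₁)) / 2))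
      = Real.sqrt ((2 * Real.pi) ^ d * S1.det) := by
    rw [hval1, hdet1, div_inv_eq_mul]
  have hval2' : (∫ x : Fin d → ℝ, Real.exp (-((x - μ₂) ⬝ᵥ S1⁻¹ *ᵥ (x - μ₂)) / 2))
      = Real.sqrt ((2 * Real.pi) ^ d * S1.det) := by
    rw [hval2, hdet1, div_inv_eq_mul]
  have hval3' : (∫ x : Fin d → ℝ, Real.exp (-((x - μ₂) ⬝ᵥ S2⁻¹ *ᵥ (x - μ₂)) / 2))
      = Real.sqrt ((2 * Real.pi) ^ d * S2.det) := by
    rw [hval3, hdet2, div_inv_eq_mul]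
  have hN1 : (∫ x, u x ^ 2) = 1 := by
    simp_rw [hu2]
    rw [MeasureTheory.integral_const_mul, hval1', hc1def, inv_mul_cancel₀ hsqrt1_ne]
  have hN2 : (∫ x, v x ^ 2) = 1 := by
    simp_rw [hv2]
    rw [MeasureTheory.integral_const_mul, hval2', hc1def, inv_mul_cancel₀ hsqrt1_ne]
  have hN3 : (∫ x, w x ^ 2) = 1 := by
    simp_rw [hw2]
    rw [MeasureTheory.integral_const_mul, hval3', hc2def, inv_mul_cancel₀ hsqrt2_ne]
  have hI1 : Integrable (fun x => u x ^ 2) := by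
    have h := hint1.const_mul c1
    refine h.congr (Filter.Eventually.of_forall fun x => ?_)
    exact (hu2 x).symm
  have hI2 : Integrable (fun x => v x ^ 2) := by
    have h := hint2.const_mul c1
    refine h.congr (Filter.Eventually.of_forall fun x => ?_)
    exact (hv2 x).symm
  have hI3 : Integrable (fun x => w x ^ 2) := by
    have h := hint3.const_mul c2
    refine h.congr (Filter.Eventually.of_forall fun x => ?_)
    exact (hw2 x).symm
  -- first cross integral
  set s : ℝ := (μ₁ - μ₂) ⬝ᵥ S1⁻¹ *ᵥ (μ₁ - μ₂) with hsdef
  have hs0 : 0 ≤ s := by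
    have h := hS1i.posSemidef.dotProduct_mulVec_nonneg (μ₁ - μ₂)
    rwa [star_trivial] at h
  set mb : Fin d → ℝ := (2⁻¹:ℝ) • (μ₁ + μ₂) with hmb
  have huv_pt : ∀ x, u x * v x
      = (c1 * Real.exp (-s/8)) * Real.exp (-((x - mb) ⬝ᵥ S1⁻¹ *ᵥ (x - mb)) / 2) := by
    intro x
    have hp := quad_par S1⁻¹ hS1isym x μ₁ μ₂
    rw [hu, hv, mul_mul_mul_comm, Real.mul_self_sqrt hc1pos.le, ← Real.exp_add,
      mul_assoc, ← Real.exp_add]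
    congr 2
    rw [hmb]
    linarith [hp]
  obtain ⟨hvalm, hintm⟩ := gauss_center d S1⁻¹ hS1i mb
  have hR1 : (∫ x, u x * v x) = Real.exp (-s/8) := by
    simp_rw [huv_pt]
    rw [MeasureTheory.integral_const_mul, hvalm, hdet1, div_inv_eq_mul]
    rw [mul_comm c1, mul_assoc, hc1def, inv_mul_cancel₀ hsqrt1_ne, mul_one]
  have hIuv : Integrable (fun x => u x * v x) := by
    have h := hintm.const_mul (c1 * Real.exp (-s/8))
    refine h.congr (Filter.Eventually.of_forall fun x => ?_)
    exact (huv_pt x).symm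
  -- second cross integral
  have hvw_pt : ∀ x, v x * w x
      = (Real.sqrt c1 * Real.sqrt c2) * Real.exp (-((x - μ₂) ⬝ᵥ Q *ᵥ (x - μ₂)) / 2) := by
    intro x
    have hQy : (x - μ₂) ⬝ᵥ Q *ᵥ (x - μ₂)
        = ((x - μ₂) ⬝ᵥ S1⁻¹ *ᵥ (x - μ₂) + (x - μ₂) ⬝ᵥ S2⁻¹ *ᵥ (x - μ₂)) / 2 := by
      rw [hQdef, Matrix.smul_mulVec, dotProduct_smul, Matrix.add_mulVec,
        dotProduct_add, smul_eq_mul]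
      ring
    rw [hv, hw, mul_mul_mul_comm, ← Real.exp_add]
    congr 2
    rw [hQy]
    ring
  obtain ⟨hvalq, hintq⟩ := gauss_center d Q hQpd μ₂
  set r2 : ℝ := Real.sqrt c1 * Real.sqrt c2 * Real.sqrt ((2 * Real.pi) ^ d / Q.det)
    with hr2def
  have hR2 : (∫ x, v x * w x) = r2 := by
    simp_rw [hvw_pt]
    rw [MeasureTheory.integral_const_mul, hvalq, hr2def]
  have hIvw : Integrable (fun x => v x * w x) := by
    have h := hintq.const_mul (Real.sqrt c1 * Real.sqrt c2)
    refine h.congr (Filter.Eventually.of_forall fun x => ?_)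
    exact (hvw_pt x).symm
  -- measurability and nonnegativity
  have hmu : AEStronglyMeasurable u (volume : Measure (Fin d → ℝ)) := by
    rw [hu]; exact (cont_gauss d S1⁻¹ μ₁ (Real.sqrt c1)).aestronglyMeasurable
  have hmv : AEStronglyMeasurable v (volume : Measure (Fin d → ℝ)) := by
    rw [hv]; exact (cont_gauss d S1⁻¹ μ₂ (Real.sqrt c1)).aestronglyMeasurable
  have hmw : AEStronglyMeasurable w (volume : Measure (Fin d → ℝ)) := by
    rw [hw]; exact (cont_gauss d S2⁻¹ μ₂ (Real.sqrt c2)).aestronglyMeasurable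
  have hu0 : ∀ x, 0 ≤ u x := fun x => by rw [hu]; positivity
  have hv0 : ∀ x, 0 ≤ v x := fun x => by rw [hv]; positivity
  have hw0 : ∀ x, 0 ≤ w x := fun x => by rw [hw]; positivity
  -- Hellinger bounds
  have H1 := hellinger_tv u v hmu hmv hu0 hv0 hI1 hI2 hIuv hN1 hN2
  rw [hR1] at H1
  have H2 := hellinger_tv v w hmv hmw hv0 hw0 hI2 hI3 hIvw hN2 hN3
  rw [hR2] at H2
  -- triangle inequality
  have hd1 : Integrable (fun x => |u x ^ 2 - v x ^ 2|) := (hI1.sub hI2).abs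
  have hd2 : Integrable (fun x => |v x ^ 2 - w x ^ 2|) := (hI2.sub hI3).abs
  have hd3 : Integrable (fun x => |u x ^ 2 - w x ^ 2|) := (hI1.sub hI3).abs
  have htri : (∫ x, |u x ^ 2 - w x ^ 2|)
      ≤ (∫ x, |u x ^ 2 - v x ^ 2|) + ∫ x, |v x ^ 2 - w x ^ 2| := by
    rw [← MeasureTheory.integral_add hd1 hd2]
    refine MeasureTheory.integral_mono hd3 (hd1.add hd2) ?_
    intro x
    exact abs_sub_le _ _ _
  -- bound 1
  have hB1 : Real.sqrt (1 - Real.exp (-s/8) ^ 2) ≤ Real.sqrt s / 2 := by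
    have he : Real.exp (-s/8) ^ 2 = Real.exp (-s/4) := by
      rw [sq, ← Real.exp_add, show -s/8 + -s/8 = -s/4 by ring]
    rw [he]
    have h1 : 1 - Real.exp (-s/4) ≤ s/4 := by
      have h := Real.add_one_le_exp (-s/4); linarith
    calc Real.sqrt (1 - Real.exp (-s/4)) ≤ Real.sqrt (s/4) := Real.sqrt_le_sqrt h1
      _ = Real.sqrt s / 2 := by
          rw [show (s/4 : ℝ) = s * (1/2)^2 by ring, Real.sqrt_mul hs0,
            Real.sqrt_sq (by norm_num : (0:ℝ) ≤ 1/2)]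
          ring
  have hs_sum : s = ∑ i, (A.mulVec (μ₁ - μ₂) i) ^ 2 := by
    rw [hsdef, ← hAsq, ← Matrix.mulVec_mulVec, hdotA]
    simp [dotProduct, sq]
  -- bound 2 : the determinant grind
  obtain ⟨lam, hlpos, hdetM, hdet1M, hfrob⟩ := eigen_facts d M hMpd
  set p : ℝ := ∏ i, Real.sqrt (lam i) with hpdef
  set qq : ℝ := ∏ i, (1 + lam i) with hqqdef
  have hppos : 0 < p := Finset.prod_pos fun i _ => Real.sqrt_pos.mpr (hlpos i)
  have hqqpos : 0 < qq := Finset.prod_pos fun i _ => by linarith [hlpos i]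
  have hp2 : p ^ 2 = M.det := by
    rw [hdetM, hpdef, ← Finset.prod_pow]
    exact Finset.prod_congr rfl fun i _ => Real.sq_sqrt (hlpos i).le
  have hdetMval : M.det = A.det * S2.det * A.det := by
    rw [hMdef, Matrix.det_mul, Matrix.det_mul]
  have hS1val : S1.det = (A.det * A.det)⁻¹ := by
    have h2 : (S1⁻¹).det = A.det * A.det := by rw [← hAsq, Matrix.det_mul]
    rw [hdet1] at h2
    rw [← h2, inv_inv]
  have hS2val : S2.det = p ^ 2 / (A.det * A.det) := by
    rw [hp2, hdetMval]
    field_simp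
  have hMinvdet : M⁻¹.det = M.det⁻¹ := by rw [Matrix.det_nonsing_inv, Ring.inverse_eq_inv']
  have hS2inv_eq : S2⁻¹ = A * M⁻¹ * A := by
    rw [hMdef, Matrix.mul_inv_rev, Matrix.mul_inv_rev]
    rw [← Matrix.mul_assoc, ← Matrix.mul_assoc, hAinv, Matrix.one_mul,
      Matrix.mul_assoc, hAinv', Matrix.mul_one]
  have hsumAA : S1⁻¹ + S2⁻¹ = A * (1 + M⁻¹) * A := by
    rw [Matrix.mul_add, Matrix.mul_one, Matrix.add_mul, hAsq, ← hS2inv_eq]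
  have h1pM : (1 : Matrix (Fin d) (Fin d) ℝ) + M⁻¹ = M⁻¹ * (1 + M) := by
    rw [Matrix.mul_add, Matrix.mul_one,
      Matrix.nonsing_inv_mul M (isUnit_iff_ne_zero.mpr hMpd.det_pos.ne'), add_comm]
  have hQval : Q.det = (2⁻¹:ℝ)^d * (A.det * A.det) * qq / p^2 := by
    rw [hQdef, Matrix.det_smul, Fintype.card_fin, hsumAA, Matrix.det_mul, Matrix.det_mul,
      h1pM, Matrix.det_mul, hMinvdet, hdet1M, ← hp2]
    field_simp
  have hprodform : (∏ i, (2 * Real.sqrt (lam i) / (1 + lam i))) = 2^d * p / qq := by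
    rw [Finset.prod_div_distrib, Finset.prod_mul_distrib, Finset.prod_const,
      Finset.card_univ, Fintype.card_fin, hpdef, hqqdef]
  have hr2sq : r2 ^ 2 = ∏ i, (2 * Real.sqrt (lam i) / (1 + lam i)) := by
    rw [hprodform, hr2def, mul_pow, mul_pow, Real.sq_sqrt hc1pos.le, Real.sq_sqrt hc2pos.le,
      Real.sq_sqrt (by positivity : (0:ℝ) ≤ (2 * Real.pi) ^ d / Q.det)]
    rw [hc1def, hc2def, ← mul_inv, ← Real.sqrt_mul (by positivity)]
    have hin : (2 * Real.pi) ^ d * S1.det * ((2 * Real.pi) ^ d * S2.det)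
        = ((2 * Real.pi) ^ d * p / (A.det * A.det))^2 := by
      rw [hS1val, hS2val]
      field_simp
    rw [hin, Real.sqrt_sq (by positivity), hQval]
    have h2d : ((2:ℝ)⁻¹)^d = ((2:ℝ)^d)⁻¹ := by rw [inv_pow]
    rw [h2d]
    field_simp
  have ht0 : ∀ i, 0 ≤ 2 * Real.sqrt (lam i) / (1 + lam i) :=
    fun i => (t_facts (lam i) (hlpos i)).1
  have ht1 : ∀ i, 2 * Real.sqrt (lam i) / (1 + lam i) ≤ 1 :=
    fun i => (t_facts (lam i) (hlpos i)).2.1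
  have ht2 : ∀ i, 1 - 2 * Real.sqrt (lam i) / (1 + lam i) ≤ (1 - lam i) ^ 2 :=
    fun i => (t_facts (lam i) (hlpos i)).2.2
  have hF : 1 - r2 ^ 2 ≤ ∑ i, ∑ j, ((1 - M) i j) ^ 2 := by
    rw [hr2sq, hfrob]
    calc 1 - ∏ i, (2 * Real.sqrt (lam i) / (1 + lam i))
        ≤ ∑ i, (1 - 2 * Real.sqrt (lam i) / (1 + lam i)) := one_sub_prod_le _ ht0 ht1
      _ ≤ ∑ i, (1 - lam i) ^ 2 := Finset.sum_le_sum fun i _ => ht2 i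
  have hB2 : Real.sqrt (1 - r2 ^ 2)
      ≤ Real.sqrt 2 * Real.sqrt (∑ i, ∑ j, ((1 - M) i j) ^ 2) := by
    calc Real.sqrt (1 - r2 ^ 2) ≤ Real.sqrt (∑ i, ∑ j, ((1 - M) i j) ^ 2) :=
          Real.sqrt_le_sqrt hF
      _ ≤ Real.sqrt 2 * Real.sqrt (∑ i, ∑ j, ((1 - M) i j) ^ 2) := by
          refine le_mul_of_one_le_left (Real.sqrt_nonneg _) ?_
          rw [show (1:ℝ) = Real.sqrt 1 by simp]
          exact Real.sqrt_le_sqrt (by norm_num)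
  -- final assembly
  have hgoal_int : (∫ x : Fin d → ℝ,
      |c1 * Real.exp (-(dotProduct (x - μ₁) (S1⁻¹.mulVec (x - μ₁))) / 2) -
        c2 * Real.exp (-(dotProduct (x - μ₂) (S2⁻¹.mulVec (x - μ₂))) / 2)|)
      = ∫ x, |u x ^ 2 - w x ^ 2| := by
    refine MeasureTheory.integral_congr_ae (Filter.Eventually.of_forall fun x => ?_)
    simp only [hu2 x, hw2 x]
  have hss : Real.sqrt (∑ i, (A.mulVec (μ₁ - μ₂) i) ^ 2) = Real.sqrt s := by
    rw [hs_sum]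
  rw [hgoal_int, hss]
  have hfin1 : (∫ x, |u x ^ 2 - v x ^ 2|) ≤ Real.sqrt s := by
    calc (∫ x, |u x ^ 2 - v x ^ 2|) ≤ 2 * Real.sqrt (1 - Real.exp (-s/8) ^ 2) := H1
      _ ≤ 2 * (Real.sqrt s / 2) := by linarith [hB1]
      _ = Real.sqrt s := by ring
  have hfin2 : (∫ x, |v x ^ 2 - w x ^ 2|)
      ≤ 2 * (Real.sqrt 2 * Real.sqrt (∑ i, ∑ j, ((1 - M) i j) ^ 2)) := by
    calc (∫ x, |v x ^ 2 - w x ^ 2|) ≤ 2 * Real.sqrt (1 - r2 ^ 2) := H2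
      _ ≤ 2 * (Real.sqrt 2 * Real.sqrt (∑ i, ∑ j, ((1 - M) i j) ^ 2)) := by linarith [hB2]
  linarith [htri]
end
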